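/- Let 𝒩 be a connected plane Euclidean network. Then diam(𝒩_ℓ) equals the maximum of the following finite collection of values: (1) d(u,w) for all pairs of vertices u, w ∈ V(𝒩); (2) for every pair of distinct non-pendant edges uv and u'v', the value min{ (d(u,v)+d(v,v')+d(v',u')+d(u',u))/2 , (d(u,v)+d(v,u')+d(u',v')+d(v',u))/2 }; (3) for every pendant edge uv with u pendant and every non-pendant edge u'v', the value d(u,v) + (d(v,u')+d(u',v')+d(v',v))/2. -/

import Mathlib

open Set
open scoped ENNReal

noncomputable section

attribute [local instance] Classical.propDecidable

/-- Points of the Euclidean plane. -/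
abbrev Pt : Type := EuclideanSpace ℝ (Fin 2)

/-- Intrinsic (geodesic) distance inside a set `X ⊆ ℝ²`: the infimum of the lengths
(total variations) of continuous paths from `p` to `q` whose image lies in `X`. -/
def idist (X : Set Pt) (p q : Pt) : ℝ≥0∞ :=
  ⨅ (γ : ℝ → Pt) (_ : ContinuousOn γ (Set.Icc 0 1)) (_ : γ '' Set.Icc 0 1 ⊆ X)
    (_ : γ 0 = p) (_ : γ 1 = q), eVariationOn γ (Set.Icc 0 1)

/-- Eccentricity of a point within `X`. -/
def ecc (X : Set Pt) (p : Pt) : ℝ≥0∞ := ⨆ q ∈ X, idist X p q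

/-- Intrinsic diameter of `X`. -/
def idiam (X : Set Pt) : ℝ≥0∞ := ⨆ p ∈ X, ecc X p

/-- A plane Euclidean network: a finite set of vertices in the plane together with a
finite set of straight-line edges (recorded as ordered pairs of distinct vertices, each
edge recorded exactly once), such that two distinct edges meet only in common endpoints. -/
structure PlaneNetwork where
  V : Finset Pt
  Edg : Finset (Pt × Pt)
  ends_mem : ∀ e ∈ Edg, e.1 ∈ V ∧ e.2 ∈ V
  ends_ne : ∀ e ∈ Edg, e.1 ≠ e.2
  no_swap : ∀ e ∈ Edg, (e.2, e.1) ∉ Edg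
  vertex_cover : ∀ v ∈ V, ∃ e ∈ Edg, v = e.1 ∨ v = e.2
  plane : ∀ e ∈ Edg, ∀ f ∈ Edg, e ≠ f →
    segment ℝ e.1 e.2 ∩ segment ℝ f.1 f.2 ⊆ ({e.1, e.2} ∩ {f.1, f.2} : Set Pt)

namespace PlaneNetwork

/-- The locus of a network: the union of all its (closed) edges. -/
def locus (N : PlaneNetwork) : Set Pt := ⋃ e ∈ N.Edg, segment ℝ e.1 e.2

/-- A network is connected when its locus is path-connected. -/
def Connected (N : PlaneNetwork) : Prop := IsPathConnected N.locus

/-- `u` and `v` are joined by an edge of the network. -/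
def IsEdge (N : PlaneNetwork) (u v : Pt) : Prop := (u, v) ∈ N.Edg ∨ (v, u) ∈ N.Edg

/-- A vertex is pendant if it is an endpoint of exactly one edge. -/
def IsPendantVertex (N : PlaneNetwork) (v : Pt) : Prop :=
  v ∈ N.V ∧ (N.Edg.filter (fun e => e.1 = v ∨ e.2 = v)).card = 1

/-- The number of pendant vertices of a network. -/
def pendantCount (N : PlaneNetwork) : ℕ := (N.V.filter fun v => N.IsPendantVertex v).card

end PlaneNetwork

/-- The union of a set with all the segments in a list. -/
def insertSegs (X : Set Pt) (L : List (Pt × Pt)) : Set Pt :=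
  X ∪ ⋃ s ∈ L, segment ℝ s.1 s.2

/-- The segments of the list are inserted iteratively: the endpoints of the first one lie
on `X`, and the endpoints of each subsequent segment lie on the union of `X` with the
previously inserted segments. -/
def ValidSegs (X : Set Pt) : List (Pt × Pt) → Prop
  | [] => True
  | s :: rest => s.1 ∈ X ∧ s.2 ∈ X ∧ ValidSegs (X ∪ segment ℝ s.1 s.2) rest

/-- A shortcut set for `X`: a finite sequence of iteratively inserted segments whose
insertion strictly decreases the intrinsic diameter. -/
def IsShortcutSet (X : Set Pt) (L : List (Pt × Pt)) : Prop :=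
  ValidSegs X L ∧ idiam (insertSegs X L) < idiam X

/-- `X` admits a shortcut set. -/
def HasShortcutSet (X : Set Pt) : Prop := ∃ L, IsShortcutSet X L

/-- The shortcut number: the minimum size of a shortcut set. -/
def scn (X : Set Pt) : ℕ :=
  sInf {k | ∃ L : List (Pt × Pt), L.length = k ∧ IsShortcutSet X L}

section IdistBasics

variable {X : Set Pt} {p q r : Pt}

lemma idist_le {γ : ℝ → Pt} (hc : ContinuousOn γ (Set.Icc 0 1))
    (himg : γ '' Set.Icc 0 1 ⊆ X) (h0 : γ 0 = p) (h1 : γ 1 = q) :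
    idist X p q ≤ eVariationOn γ (Set.Icc 0 1) := by
  unfold idist
  exact iInf_le_of_le γ (iInf_le_of_le hc (iInf_le_of_le himg
    (iInf_le_of_le h0 (iInf_le _ h1))))

lemma edist_le_idist : edist p q ≤ idist X p q := by
  unfold idist
  refine le_iInf fun γ => le_iInf fun hc => le_iInf fun himg => le_iInf fun h0 =>
    le_iInf fun h1 => ?_
  subst h0; subst h1
  exact eVariationOn.edist_le γ (Set.left_mem_Icc.2 zero_le_one)
    (Set.right_mem_Icc.2 zero_le_one)

lemma idist_self (hp : p ∈ X) : idist X p p = 0 := by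
  refine le_antisymm ?_ (zero_le)
  have h := idist_le (X := X) (γ := fun _ => p) continuousOn_const ?_ rfl rfl
  · refine h.trans (le_of_eq (eVariationOn.constant_on ?_))
    intro x hx y hy
    rcases hx with ⟨_, _, rfl⟩; rcases hy with ⟨_, _, rfl⟩; rfl
  · rintro _ ⟨_, _, rfl⟩; exact hp

lemma idist_comm_le : idist X q p ≤ idist X p q := by
  conv_rhs => rw [idist]
  refine le_iInf fun γ => le_iInf fun hc => le_iInf fun himg => le_iInf fun h0 =>
    le_iInf fun h1 => ?_
  have himage : (fun t : ℝ => 1 - t) '' Set.Icc 0 1 = Set.Icc 0 1 := by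
    rw [Set.image_const_sub_Icc]; norm_num
  have hxx : eVariationOn (γ ∘ fun t : ℝ => 1 - t) (Set.Icc 0 1)
      = eVariationOn γ (Set.Icc 0 1) := by
    have hanti : AntitoneOn (fun t : ℝ => 1 - t) (Set.Icc 0 1) :=
      fun x _ y _ hxy => by simp only [sub_le_sub_iff_left]; exact hxy
    rw [eVariationOn.comp_eq_of_antitoneOn _ _ hanti, himage]
  refine le_trans (idist_le ?_ ?_ ?_ ?_) hxx.le
  · exact hc.comp (continuous_const.sub continuous_id).continuousOn
      (by rw [Set.mapsTo_iff_image_subset]; rw [himage])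
  · rw [Set.image_comp, himage]; exact himg
  · simp only [Function.comp_apply]; norm_num [h1]
  · simp only [Function.comp_apply]; norm_num [h0]

lemma idist_comm : idist X p q = idist X q p := le_antisymm idist_comm_le idist_comm_le

lemma idist_le_eVariationOn_Icc {γ : ℝ → Pt} {a b : ℝ} (hab : a ≤ b)
    (hc : ContinuousOn γ (Set.Icc a b)) (himg : γ '' Set.Icc a b ⊆ X) :
    idist X (γ a) (γ b) ≤ eVariationOn γ (Set.Icc a b) := by
  rcases eq_or_lt_of_le hab with rfl | hlt
  · rw [idist_self (himg ⟨a, Set.left_mem_Icc.2 le_rfl, rfl⟩)]; exact zero_le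
  set φ : ℝ → ℝ := fun t => (b - a) * t + a with hφ
  have himage : φ '' Set.Icc 0 1 = Set.Icc a b := by
    rw [hφ, Set.image_affine_Icc' (by linarith : (0:ℝ) < b - a)]
    norm_num
  have hmaps : Set.MapsTo φ (Set.Icc 0 1) (Set.Icc a b) := by
    rw [Set.mapsTo_iff_image_subset, himage]
  have hvar : eVariationOn (γ ∘ φ) (Set.Icc 0 1) = eVariationOn γ (Set.Icc a b) := by
    have hmono : MonotoneOn φ (Set.Icc 0 1) := fun x _ y _ hxy => by
      simp only [hφ, add_le_add_iff_right]; nlinarith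
    rw [eVariationOn.comp_eq_of_monotoneOn _ _ hmono, himage]
  have h0 : (γ ∘ φ) 0 = γ a := by simp only [Function.comp_apply, hφ]; norm_num
  have h1 : (γ ∘ φ) 1 = γ b := by simp only [Function.comp_apply, hφ]; norm_num
  refine le_trans ?_ hvar.le
  rw [← h0, ← h1]
  refine idist_le ?_ ?_ rfl rfl
  · exact hc.comp ((continuous_const.mul continuous_id).add continuous_const).continuousOn hmaps
  · rw [Set.image_comp, himage]; exact himg

end IdistBasics

section IdistTriangle

variable {X : Set Pt} {p q r : Pt}

lemma exists_path_of_lt {c : ℝ≥0∞} (h : idist X p q < c) :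
    ∃ γ : ℝ → Pt, ContinuousOn γ (Set.Icc 0 1) ∧ γ '' Set.Icc 0 1 ⊆ X ∧
      γ 0 = p ∧ γ 1 = q ∧ eVariationOn γ (Set.Icc 0 1) < c := by
  unfold idist at h
  simp only [iInf_lt_iff] at h
  obtain ⟨γ, hc, himg, h0, h1, hlt⟩ := h
  exact ⟨γ, hc, himg, h0, h1, hlt⟩

lemma idist_le_var_add_var {γ1 γ2 : ℝ → Pt}
    (hc1 : ContinuousOn γ1 (Set.Icc 0 1)) (him1 : γ1 '' Set.Icc 0 1 ⊆ X)
    (e10 : γ1 0 = p) (e11 : γ1 1 = q)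
    (hc2 : ContinuousOn γ2 (Set.Icc 0 1)) (him2 : γ2 '' Set.Icc 0 1 ⊆ X)
    (e20 : γ2 0 = q) (e21 : γ2 1 = r) :
    idist X p r ≤ eVariationOn γ1 (Set.Icc 0 1) + eVariationOn γ2 (Set.Icc 0 1) := by
  let P1 : Path p q :=
    { toFun := (Set.Icc (0:ℝ) 1).restrict γ1
      continuous_toFun := hc1.restrict
      source' := e10
      target' := e11 }
  let P2 : Path q r :=
    { toFun := (Set.Icc (0:ℝ) 1).restrict γ2
      continuous_toFun := hc2.restrict
      source' := e20
      target' := e21 }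
  let glue : ℝ → Pt := (P1.trans P2).extend
  have hglue0 : glue 0 = p := by simp [glue]
  have hglue1 : glue 1 = r := by simp [glue]
  have hcont : ContinuousOn glue (Set.Icc 0 1) := (Path.continuous_extend _).continuousOn
  have himg : glue '' Set.Icc 0 1 ⊆ X := by
    intro z hz
    obtain ⟨t, _, rfl⟩ := hz
    have : glue t ∈ Set.range (P1.trans P2) := by
      have := Path.extend_range (P1.trans P2)
      exact this ▸ Set.mem_range_self t
    rw [Path.trans_range] at this
    rcases this with ⟨s, hs⟩ | ⟨s, hs⟩
    · exact him1 (hs ▸ ⟨s.1, s.2, rfl⟩)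
    · exact him2 (hs ▸ ⟨s.1, s.2, rfl⟩)
  have heq1 : Set.EqOn glue (γ1 ∘ fun t : ℝ => 2 * t) (Set.Icc 0 (1/2)) := by
    intro t ht
    have ht' : t ∈ Set.Icc (0:ℝ) 1 := ⟨ht.1, ht.2.trans (by norm_num)⟩
    have : glue t = (P1.trans P2) ⟨t, ht'⟩ := Path.extend_apply _ ht'
    rw [this, Path.trans_apply]
    rw [dif_pos ht.2]
    rfl
  have heq2 : Set.EqOn glue (γ2 ∘ fun t : ℝ => 2 * t - 1) (Set.Icc (1/2) 1) := by
    intro t ht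
    have ht' : t ∈ Set.Icc (0:ℝ) 1 := ⟨le_trans (by norm_num) ht.1, ht.2⟩
    have hg : glue t = (P1.trans P2) ⟨t, ht'⟩ := Path.extend_apply _ ht'
    rw [hg, Path.trans_apply]
    rcases lt_or_eq_of_le ht.1 with hlt | hEq
    · rw [dif_neg (by simpa using not_le.2 hlt)]
      rfl
    · rw [dif_pos (le_of_eq hEq.symm)]
      show γ1 (2 * t) = γ2 (2 * t - 1)
      rw [← hEq]
      norm_num [e11, e20]
  have hsplit : eVariationOn glue (Set.Icc 0 (1/2)) + eVariationOn glue (Set.Icc (1/2) 1)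
      = eVariationOn glue (Set.Icc 0 1) := by
    have := eVariationOn.Icc_add_Icc glue (s := Set.univ)
      (by norm_num : (0:ℝ) ≤ 1/2) (by norm_num : (1:ℝ)/2 ≤ 1) (Set.mem_univ _)
    simpa [Set.univ_inter] using this
  have hv1 : eVariationOn glue (Set.Icc 0 (1/2)) = eVariationOn γ1 (Set.Icc 0 1) := by
    rw [eVariationOn.eq_of_eqOn heq1]
    have hmono : MonotoneOn (fun t : ℝ => 2 * t) (Set.Icc 0 (1/2)) :=
      fun x _ y _ hxy => by dsimp only; linarith
    rw [eVariationOn.comp_eq_of_monotoneOn _ _ hmono]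
    congr 1
    have := Set.image_affine_Icc' (by norm_num : (0:ℝ) < 2) 0 0 (1/2)
    norm_num at this
    exact this
  have hv2 : eVariationOn glue (Set.Icc (1/2) 1) = eVariationOn γ2 (Set.Icc 0 1) := by
    rw [eVariationOn.eq_of_eqOn heq2]
    have hmono : MonotoneOn (fun t : ℝ => 2 * t - 1) (Set.Icc (1/2) 1) :=
      fun x _ y _ hxy => by dsimp only; linarith
    rw [eVariationOn.comp_eq_of_monotoneOn _ _ hmono]
    congr 1
    ext x
    constructor
    · rintro ⟨t, ht, rfl⟩
      simp only [Set.mem_Icc]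
      constructor <;> linarith [ht.1, ht.2]
    · intro hx
      exact ⟨(x+1)/2, ⟨by linarith [hx.1], by linarith [hx.2]⟩, by dsimp only; ring⟩
  calc idist X p r ≤ eVariationOn glue (Set.Icc 0 1) := idist_le hcont himg hglue0 hglue1
    _ = _ := by rw [← hsplit, hv1, hv2]

lemma idist_triangle (p q r : Pt) : idist X p r ≤ idist X p q + idist X q r := by
  rcases eq_or_ne (idist X p q) ⊤ with htop | h1top
  · rw [htop, top_add]; exact le_top
  rcases eq_or_ne (idist X q r) ⊤ with htop | h2top
  · rw [htop, add_top]; exact le_top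
  refine ENNReal.le_of_forall_pos_le_add fun ε hε _ => ?_
  have hhalf : (0:ℝ≥0∞) < ε / 2 := by
    simp only [ENNReal.div_pos_iff]
    exact ⟨by exact_mod_cast hε.ne', by norm_num⟩
  obtain ⟨γ1, hc1, hi1, h10, h11, hv1⟩ := exists_path_of_lt
    (show idist X p q < idist X p q + ε/2 from
      ENNReal.lt_add_right h1top hhalf.ne')
  obtain ⟨γ2, hc2, hi2, h20, h21, hv2⟩ := exists_path_of_lt
    (show idist X q r < idist X q r + ε/2 from
      ENNReal.lt_add_right h2top hhalf.ne')
  calc idist X p r ≤ eVariationOn γ1 (Set.Icc 0 1) + eVariationOn γ2 (Set.Icc 0 1) :=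
        idist_le_var_add_var hc1 hi1 h10 h11 hc2 hi2 h20 h21
    _ ≤ (idist X p q + ε/2) + (idist X q r + ε/2) := add_le_add hv1.le hv2.le
    _ = idist X p q + idist X q r + (ε/2 + ε/2) := by ring
    _ = idist X p q + idist X q r + ε := by rw [ENNReal.add_halves]

end IdistTriangle

section StraightLine

variable {X : Set Pt} {p q u v : Pt}

lemma lipschitz_lineMap (p q : Pt) :
    LipschitzWith (nndist p q) ⇑(AffineMap.lineMap p q : ℝ →ᵃ[ℝ] Pt) := by
  intro s t
  rw [edist_nndist, edist_nndist, nndist_lineMap_lineMap, ENNReal.coe_mul, mul_comm]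

lemma idist_le_edist_of_seg (h : segment ℝ p q ⊆ X) : idist X p q ≤ edist p q := by
  set γ : ℝ → Pt := ⇑(AffineMap.lineMap p q : ℝ →ᵃ[ℝ] Pt) with hγ
  have hlip := lipschitz_lineMap p q
  have hcont : ContinuousOn γ (Set.Icc 0 1) := hlip.continuous.continuousOn
  have himg : γ '' Set.Icc 0 1 ⊆ X := by
    rw [← segment_eq_image_lineMap]; exact h
  have h0 : γ 0 = p := AffineMap.lineMap_apply_zero p q
  have h1 : γ 1 = q := AffineMap.lineMap_apply_one p q
  refine (idist_le hcont himg h0 h1).trans ?_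
  have hcomp : eVariationOn (γ ∘ (id : ℝ → ℝ)) (Set.Icc 0 1)
      ≤ (nndist p q : ℝ≥0∞) * eVariationOn (id : ℝ → ℝ) (Set.Icc 0 1) :=
    LipschitzOnWith.comp_eVariationOn_le (hlip.lipschitzOnWith (s := Set.univ))
      (Set.mapsTo_univ id _)
  have hid : eVariationOn (id : ℝ → ℝ) (Set.Icc 0 1) ≤ 1 := by
    have := MonotoneOn.eVariationOn_le (f := (id : ℝ → ℝ)) (s := Set.Icc (0:ℝ) 1)
      monotoneOn_id (Set.left_mem_Icc.2 zero_le_one) (Set.right_mem_Icc.2 zero_le_one)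
    simpa using this
  calc eVariationOn γ (Set.Icc 0 1) = eVariationOn (γ ∘ (id : ℝ → ℝ)) (Set.Icc 0 1) := rfl
    _ ≤ (nndist p q : ℝ≥0∞) * eVariationOn (id : ℝ → ℝ) (Set.Icc 0 1) := hcomp
    _ ≤ (nndist p q : ℝ≥0∞) * 1 := mul_le_mul_right hid _
    _ = edist p q := by rw [mul_one, edist_nndist]

lemma edist_le_of_mem_segment (hp : p ∈ segment ℝ u v) (hq : q ∈ segment ℝ u v) :
    edist p q ≤ edist u v := by
  rw [segment_eq_image_lineMap] at hp hq
  obtain ⟨s, hs, rfl⟩ := hp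
  obtain ⟨t, ht, rfl⟩ := hq
  rw [edist_dist, edist_dist, dist_lineMap_lineMap]
  refine ENNReal.ofReal_le_ofReal ?_
  have h1 : dist s t ≤ 1 := by
    rw [Real.dist_eq]
    rcases hs with ⟨hs0, hs1⟩; rcases ht with ⟨ht0, ht1⟩
    rw [abs_le]; constructor <;> linarith
  calc dist s t * dist u v ≤ 1 * dist u v :=
        mul_le_mul_of_nonneg_right h1 dist_nonneg
    _ = dist u v := one_mul _

lemma edist_add_edist_of_mem_segment (hp : p ∈ segment ℝ u v) :
    edist u p + edist p v = edist u v := by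
  rw [edist_dist, edist_dist, edist_dist, ← ENNReal.ofReal_add dist_nonneg dist_nonneg,
    dist_add_dist_of_mem_segment hp]

lemma isClosed_seg (u v : Pt) : IsClosed (segment ℝ u v) := by
  have : IsClosed (convexHull ℝ ({u, v} : Set Pt)) :=
    (Set.toFinite _).isClosed_convexHull (𝕜 := ℝ)
  rwa [convexHull_pair] at this

lemma lineMap_mem_segment' {t : ℝ} (h0 : 0 ≤ t) (h1 : t ≤ 1) :
    (AffineMap.lineMap u v : ℝ →ᵃ[ℝ] Pt) t ∈ segment ℝ u v := by
  rw [segment_eq_image_lineMap]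
  exact ⟨t, ⟨h0, h1⟩, rfl⟩

lemma edist_lineMap_left (u v : Pt) {t : ℝ} (h0 : 0 ≤ t) :
    edist u ((AffineMap.lineMap u v : ℝ →ᵃ[ℝ] Pt) t) = ENNReal.ofReal (t * dist u v) := by
  have : dist ((AffineMap.lineMap u v : ℝ →ᵃ[ℝ] Pt) 0) ((AffineMap.lineMap u v : ℝ →ᵃ[ℝ] Pt) t)
      = dist (0:ℝ) t * dist u v := dist_lineMap_lineMap u v 0 t
  rw [AffineMap.lineMap_apply_zero] at this
  rw [edist_dist, this]
  congr 1
  rw [Real.dist_eq, zero_sub, abs_neg, abs_of_nonneg h0]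

lemma edist_lineMap_right (u v : Pt) {t : ℝ} (h1 : t ≤ 1) :
    edist ((AffineMap.lineMap u v : ℝ →ᵃ[ℝ] Pt) t) v = ENNReal.ofReal ((1-t) * dist u v) := by
  have : dist ((AffineMap.lineMap u v : ℝ →ᵃ[ℝ] Pt) t) ((AffineMap.lineMap u v : ℝ →ᵃ[ℝ] Pt) 1)
      = dist t (1:ℝ) * dist u v := dist_lineMap_lineMap u v t 1
  rw [AffineMap.lineMap_apply_one] at this
  rw [edist_dist, this]
  congr 1
  rw [Real.dist_eq, abs_of_nonpos (by linarith : t - 1 ≤ 0)]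
  ring

end StraightLine

namespace PlaneNetwork

variable {N : PlaneNetwork} {u v u' v' : Pt}

lemma IsEdge.canonical (h : N.IsEdge u v) : ∃ e ∈ N.Edg, e = (u, v) ∨ e = (v, u) := by
  rcases h with h | h
  · exact ⟨(u, v), h, Or.inl rfl⟩
  · exact ⟨(v, u), h, Or.inr rfl⟩

lemma seg_eq_of_can {e : Pt × Pt} (h : e = (u, v) ∨ e = (v, u)) :
    segment ℝ e.1 e.2 = segment ℝ u v := by
  rcases h with rfl | rfl
  · rfl
  · exact segment_symm ℝ v u

lemma pair_eq_of_can {e : Pt × Pt} (h : e = (u, v) ∨ e = (v, u)) :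
    ({e.1, e.2} : Set Pt) = {u, v} := by
  rcases h with rfl | rfl
  · rfl
  · exact Set.pair_comm v u

lemma IsEdge.ne (h : N.IsEdge u v) : u ≠ v := by
  rcases h with h | h
  · exact N.ends_ne _ h
  · exact (N.ends_ne _ h).symm

lemma IsEdge.symm (h : N.IsEdge u v) : N.IsEdge v u := h.elim Or.inr Or.inl

lemma IsEdge.left_mem_V (h : N.IsEdge u v) : u ∈ N.V := by
  rcases h with h | h
  · exact (N.ends_mem _ h).1
  · exact (N.ends_mem _ h).2

lemma IsEdge.right_mem_V (h : N.IsEdge u v) : v ∈ N.V := h.symm.left_mem_V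

lemma IsEdge.seg_subset_locus (h : N.IsEdge u v) : segment ℝ u v ⊆ N.locus := by
  obtain ⟨e, he, hcan⟩ := h.canonical
  rw [← seg_eq_of_can hcan]
  intro x hx
  exact Set.mem_biUnion he hx

lemma IsEdge.left_mem_locus (h : N.IsEdge u v) : u ∈ N.locus :=
  h.seg_subset_locus (left_mem_segment ℝ u v)

lemma IsEdge.right_mem_locus (h : N.IsEdge u v) : v ∈ N.locus :=
  h.seg_subset_locus (right_mem_segment ℝ u v)

lemma mem_locus_of_mem_V (hv : v ∈ N.V) : v ∈ N.locus := by
  obtain ⟨e, he, hv⟩ := N.vertex_cover v hv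
  have hE : N.IsEdge e.1 e.2 := Or.inl he
  rcases hv with rfl | rfl
  · exact hE.left_mem_locus
  · exact hE.right_mem_locus

lemma exists_edge_of_mem_locus (hz : v ∈ N.locus) :
    ∃ a b, N.IsEdge a b ∧ v ∈ segment ℝ a b := by
  simp only [locus, Set.mem_iUnion] at hz
  obtain ⟨e, he, hv⟩ := hz
  exact ⟨e.1, e.2, Or.inl he, hv⟩

lemma IsEdge.idist_eq (h : N.IsEdge u v) : idist N.locus u v = edist u v :=
  le_antisymm (idist_le_edist_of_seg h.seg_subset_locus) edist_le_idist

lemma IsEdge.idist_le_edist_of_mem_seg (h : N.IsEdge u v) {p q : Pt}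
    (hp : p ∈ segment ℝ u v) (hq : q ∈ segment ℝ u v) :
    idist N.locus p q ≤ edist p q :=
  idist_le_edist_of_seg (((convex_segment u v).segment_subset hp hq).trans h.seg_subset_locus)

lemma seg_inter_subset (h1 : N.IsEdge u v) (h2 : N.IsEdge u' v')
    (hne : ({u, v} : Set Pt) ≠ {u', v'}) :
    segment ℝ u v ∩ segment ℝ u' v' ⊆ ({u, v} ∩ {u', v'} : Set Pt) := by
  obtain ⟨e, he, hecan⟩ := h1.canonical
  obtain ⟨f, hf, hfcan⟩ := h2.canonical
  have hef : e ≠ f := by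
    rintro rfl
    exact hne ((pair_eq_of_can hecan).symm.trans (pair_eq_of_can hfcan))
  have := N.plane e he f hf hef
  rwa [seg_eq_of_can hecan, seg_eq_of_can hfcan, pair_eq_of_can hecan,
    pair_eq_of_can hfcan] at this

lemma interior_not_mem_other (h1 : N.IsEdge u v) {w : Pt} (hw : w ∈ segment ℝ u v)
    (hw' : w ∉ ({u, v} : Set Pt)) :
    ∀ f ∈ N.Edg, ¬(f = (u, v) ∨ f = (v, u)) → w ∉ segment ℝ f.1 f.2 := by
  intro f hf hfcan hwf
  obtain ⟨e, he, hecan⟩ := h1.canonical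
  have hef : e ≠ f := by
    rintro rfl
    exact hfcan hecan
  have := N.plane e he f hf hef ⟨(seg_eq_of_can hecan).symm ▸ hw, hwf⟩
  rw [pair_eq_of_can hecan] at this
  exact hw' this.1

lemma pendant_unique (hu : N.IsPendantVertex u) {e f : Pt × Pt}
    (he : e ∈ N.Edg) (hf : f ∈ N.Edg)
    (heu : e.1 = u ∨ e.2 = u) (hfu : f.1 = u ∨ f.2 = u) : e = f := by
  have h1 : e ∈ N.Edg.filter (fun e => e.1 = u ∨ e.2 = u) := Finset.mem_filter.2 ⟨he, heu⟩
  have h2 : f ∈ N.Edg.filter (fun e => e.1 = u ∨ e.2 = u) := Finset.mem_filter.2 ⟨hf, hfu⟩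
  exact Finset.card_le_one.1 hu.2.le _ h1 _ h2

lemma pendant_not_mem_other (hu : N.IsPendantVertex u) (h1 : N.IsEdge u v) :
    ∀ f ∈ N.Edg, ¬(f = (u, v) ∨ f = (v, u)) → u ∉ segment ℝ f.1 f.2 := by
  intro f hf hfcan huf
  obtain ⟨e, he, hecan⟩ := h1.canonical
  have hef : e ≠ f := by rintro rfl; exact hfcan hecan
  have hue : u ∈ segment ℝ e.1 e.2 := by
    rw [seg_eq_of_can hecan]; exact left_mem_segment ℝ u v
  have := N.plane e he f hf hef ⟨hue, huf⟩
  have hfu : f.1 = u ∨ f.2 = u := by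
    rcases this.2 with h | h
    · exact Or.inl h.symm
    · exact Or.inr h.symm
  have heu : e.1 = u ∨ e.2 = u := by
    rcases hecan with rfl | rfl
    · exact Or.inl rfl
    · exact Or.inr rfl
  exact hef (pendant_unique hu he hf heu hfu)

lemma vertex_not_mem_seg_interior (h1 : N.IsEdge u v) (h2 : N.IsEdge u' v')
    (hne : ({u, v} : Set Pt) ≠ {u', v'}) :
    u' ∉ segment ℝ u v \ ({u, v} : Set Pt) := by
  rintro ⟨hmem, hnot⟩
  exact hnot (seg_inter_subset h1 h2 hne ⟨hmem, left_mem_segment ℝ u' v'⟩).1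

lemma pendant_ne_other_vertex (hu : N.IsPendantVertex u) (h1 : N.IsEdge u v)
    (h2 : N.IsEdge u' v') (hne : ({u, v} : Set Pt) ≠ {u', v'}) :
    u ≠ u' ∧ u ≠ v' := by
  obtain ⟨e, he, hecan⟩ := h1.canonical
  have heu : e.1 = u ∨ e.2 = u := by
    rcases hecan with rfl | rfl
    · exact Or.inl rfl
    · exact Or.inr rfl
  constructor <;> rintro rfl
  · obtain ⟨f, hf, hfcan⟩ := h2.canonical
    have hfu : f.1 = u ∨ f.2 = u := by
      rcases hfcan with rfl | rfl
      · exact Or.inl rfl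
      · exact Or.inr rfl
    have hef : e = f := pendant_unique hu he hf heu hfu
    apply hne
    rw [← pair_eq_of_can hecan, hef, pair_eq_of_can hfcan]
  · obtain ⟨f, hf, hfcan⟩ := h2.symm.canonical
    have hfu : f.1 = u ∨ f.2 = u := by
      rcases hfcan with rfl | rfl
      · exact Or.inl rfl
      · exact Or.inr rfl
    have hef : e = f := pendant_unique hu he hf heu hfu
    apply hne
    rw [← pair_eq_of_can hecan, hef, pair_eq_of_can hfcan, Set.pair_comm]

lemma locus_open_at (h1 : N.IsEdge u v) {w : Pt} (hw : w ∈ segment ℝ u v)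
    (hother : ∀ f ∈ N.Edg, ¬(f = (u, v) ∨ f = (v, u)) → w ∉ segment ℝ f.1 f.2) :
    ∃ ε > 0, ∀ z ∈ N.locus, dist z w < ε → z ∈ segment ℝ u v := by
  classical
  set K : Set Pt :=
    ⋃ f ∈ N.Edg.filter (fun f => ¬(f = (u, v) ∨ f = (v, u))), segment ℝ f.1 f.2 with hK
  have hKclosed : IsClosed K := by
    refine Set.Finite.isClosed_biUnion (Finset.finite_toSet _) fun f _ => isClosed_seg _ _
  have hwK : w ∉ K := by
    rw [hK]
    simp only [Set.mem_iUnion, Finset.mem_coe, Finset.mem_filter]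
    rintro ⟨f, ⟨hf, hfcan⟩, hwf⟩
    exact hother f hf hfcan hwf
  obtain ⟨ε, hε, hball⟩ := Metric.isOpen_iff.1 hKclosed.isOpen_compl w hwK
  refine ⟨ε, hε, fun z hz hdist => ?_⟩
  obtain ⟨a, b, hab, hzseg⟩ := exists_edge_of_mem_locus hz
  obtain ⟨f, hf, hfcan⟩ := hab.canonical
  by_cases hc : f = (u, v) ∨ f = (v, u)
  · rw [← seg_eq_of_can hc, seg_eq_of_can hfcan]
    exact hzseg
  · exfalso
    refine hball (Metric.mem_ball.2 hdist) ?_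
    rw [hK]
    simp only [Set.mem_iUnion, Finset.mem_coe, Finset.mem_filter]
    exact ⟨f, ⟨hf, hc⟩, (seg_eq_of_can hfcan).symm ▸ hzseg⟩

end PlaneNetwork

namespace PlaneNetwork
open Topology Filter

variable {N : PlaneNetwork} {u v : Pt}

lemma exit_lemma (h1 : N.IsEdge u v) (G : Set Pt) (hG : G ⊆ ({u, v} : Set Pt))
    (hopen : ∀ w ∈ segment ℝ u v, w ∉ G →
      ∀ f ∈ N.Edg, ¬(f = (u, v) ∨ f = (v, u)) → w ∉ segment ℝ f.1 f.2)
    {γ : ℝ → Pt} (hc : ContinuousOn γ (Set.Icc 0 1)) (himg : γ '' Set.Icc 0 1 ⊆ N.locus)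
    (hz : γ 0 ∉ segment ℝ u v \ G) (hp : γ 1 ∈ segment ℝ u v) :
    ∃ T ∈ Set.Icc (0:ℝ) 1, γ T ∈ G := by
  set S := {t : ℝ | t ∈ Set.Icc (0:ℝ) 1 ∧ γ '' Set.Icc t 1 ⊆ segment ℝ u v} with hS
  have h1S : (1:ℝ) ∈ S := by
    refine ⟨⟨zero_le_one, le_rfl⟩, ?_⟩
    rintro x ⟨s, hs, rfl⟩
    have : s = 1 := le_antisymm hs.2 hs.1
    rw [this]; exact hp
  have hSne : S.Nonempty := ⟨1, h1S⟩
  have hSbdd : BddBelow S := ⟨0, fun t ht => ht.1.1⟩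
  set T := sInf S with hT
  have hT0 : 0 ≤ T := le_csInf hSne fun t ht => ht.1.1
  have hT1 : T ≤ 1 := csInf_le hSbdd h1S
  have htail : ∀ t, T < t → t ≤ 1 → γ t ∈ segment ℝ u v := by
    intro t hTt ht1
    obtain ⟨s, hsS, hst⟩ := exists_lt_of_csInf_lt hSne hTt
    exact hsS.2 ⟨t, ⟨hst.le, ht1⟩, rfl⟩
  have hγT : γ T ∈ segment ℝ u v := by
    rcases eq_or_lt_of_le hT1 with hEq | hTlt
    · rw [hEq]; exact hp
    · have hne : (𝓝[Set.Ioc T 1] T).NeBot := by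
        rw [← mem_closure_iff_nhdsWithin_neBot, closure_Ioc (by linarith : T ≠ 1)]
        exact ⟨le_rfl, hT1⟩
      have htendsto : Filter.Tendsto γ (𝓝[Set.Ioc T 1] T) (𝓝 (γ T)) := by
        have hcw := hc T ⟨hT0, hT1⟩
        exact hcw.mono_left (nhdsWithin_mono T
          (fun x hx => ⟨hT0.trans hx.1.le, hx.2⟩))
      exact (isClosed_seg u v).mem_of_tendsto htendsto
        (Filter.eventually_of_mem self_mem_nhdsWithin fun t ht => htail t ht.1 ht.2)
  by_cases hTG : γ T ∈ G
  · exact ⟨T, ⟨hT0, hT1⟩, hTG⟩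
  exfalso
  rcases eq_or_lt_of_le hT0 with hEq | hTpos
  · rw [← hEq] at hγT hTG
    exact hz ⟨hγT, hTG⟩
  obtain ⟨ε, hε, hball⟩ := locus_open_at h1 hγT (hopen _ hγT hTG)
  have hcT := hc T ⟨hT0, hT1⟩
  obtain ⟨δ, hδ, hclose⟩ := Metric.continuousWithinAt_iff.1 hcT ε hε
  set T' := max 0 (T - δ/2) with hT'
  have hT'0 : 0 ≤ T' := le_max_left _ _
  have hT'T : T' < T := max_lt hTpos (by linarith)
  have hT'S : T' ∈ S := by
    refine ⟨⟨hT'0, hT'T.le.trans hT1⟩, ?_⟩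
    rintro x ⟨t, ht, rfl⟩
    rcases lt_or_ge T t with h | h
    · exact htail t h ht.2
    · rcases eq_or_lt_of_le h with rfl | hlt
      · exact hγT
      · have htIcc : t ∈ Set.Icc (0:ℝ) 1 := ⟨hT'0.trans ht.1, ht.2⟩
        refine hball _ (himg ⟨t, htIcc, rfl⟩) (hclose htIcc ?_)
        rw [Real.dist_eq, abs_of_nonpos (by linarith : t - T ≤ 0)]
        have : T - δ/2 ≤ t := le_trans (le_max_right _ _) ht.1
        linarith
  exact absurd (csInf_le hSbdd hT'S) (not_le.2 hT'T)

lemma cut_interior (h1 : N.IsEdge u v) {p z : Pt} (hp : p ∈ segment ℝ u v)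
    (hz : z ∉ segment ℝ u v \ ({u, v} : Set Pt)) :
    min (idist N.locus z u + edist u p) (idist N.locus z v + edist v p)
      ≤ idist N.locus z p := by
  rw [idist]
  refine le_iInf fun γ => le_iInf fun hc => le_iInf fun himg => le_iInf fun h0 =>
    le_iInf fun h1' => ?_
  subst h0; subst h1'
  obtain ⟨T, hTmem, hTG⟩ := exit_lemma h1 ({u, v} : Set Pt) subset_rfl
    (fun w hw hw' => interior_not_mem_other h1 hw hw') hc himg hz hp
  have hsplit : eVariationOn γ (Set.Icc 0 T) + eVariationOn γ (Set.Icc T 1)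
      = eVariationOn γ (Set.Icc 0 1) := by
    have := eVariationOn.Icc_add_Icc γ (s := Set.univ) hTmem.1 hTmem.2 (Set.mem_univ T)
    simpa using this
  have hle1 : idist N.locus (γ 0) (γ T) ≤ eVariationOn γ (Set.Icc 0 T) :=
    idist_le_eVariationOn_Icc hTmem.1
      (hc.mono (Set.Icc_subset_Icc le_rfl hTmem.2))
      ((Set.image_mono (Set.Icc_subset_Icc le_rfl hTmem.2)).trans himg)
  have hle2 : edist (γ T) (γ 1) ≤ eVariationOn γ (Set.Icc T 1) :=
    eVariationOn.edist_le γ (Set.left_mem_Icc.2 hTmem.2) (Set.right_mem_Icc.2 hTmem.2)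
  rcases hTG with hTu | hTv
  · calc min (idist N.locus (γ 0) u + edist u (γ 1))
          (idist N.locus (γ 0) v + edist v (γ 1))
        ≤ idist N.locus (γ 0) u + edist u (γ 1) := min_le_left _ _
      _ = idist N.locus (γ 0) (γ T) + edist (γ T) (γ 1) := by rw [hTu]
      _ ≤ eVariationOn γ (Set.Icc 0 T) + eVariationOn γ (Set.Icc T 1) := add_le_add hle1 hle2
      _ = eVariationOn γ (Set.Icc 0 1) := hsplit
  · simp only [Set.mem_singleton_iff] at hTv
    calc min (idist N.locus (γ 0) u + edist u (γ 1))
          (idist N.locus (γ 0) v + edist v (γ 1))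
        ≤ idist N.locus (γ 0) v + edist v (γ 1) := min_le_right _ _
      _ = idist N.locus (γ 0) (γ T) + edist (γ T) (γ 1) := by rw [hTv]
      _ ≤ eVariationOn γ (Set.Icc 0 T) + eVariationOn γ (Set.Icc T 1) := add_le_add hle1 hle2
      _ = eVariationOn γ (Set.Icc 0 1) := hsplit

lemma cut_pendant (hu : N.IsPendantVertex u) (h1 : N.IsEdge u v) {z : Pt}
    (hz : z ∉ segment ℝ u v) :
    idist N.locus z v + edist v u ≤ idist N.locus z u := by
  conv_rhs => rw [idist]
  refine le_iInf fun γ => le_iInf fun hc => le_iInf fun himg => le_iInf fun h0 =>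
    le_iInf fun h1' => ?_
  have hopen : ∀ w ∈ segment ℝ u v, w ∉ ({v} : Set Pt) →
      ∀ f ∈ N.Edg, ¬(f = (u, v) ∨ f = (v, u)) → w ∉ segment ℝ f.1 f.2 := by
    intro w hw hwv
    by_cases hwu : w = u
    · subst hwu; exact pendant_not_mem_other hu h1
    · exact interior_not_mem_other h1 hw (by
        rintro (rfl | h)
        · exact hwu rfl
        · exact hwv h)
  have hz' : γ 0 ∉ segment ℝ u v \ ({v} : Set Pt) := by
    rw [h0]; exact fun hmem => hz hmem.1
  have hp' : γ 1 ∈ segment ℝ u v := by rw [h1']; exact left_mem_segment ℝ u v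
  obtain ⟨T, hTmem, hTG⟩ := exit_lemma h1 ({v} : Set Pt)
    (by intro x hx; exact Or.inr hx) hopen hc himg hz' hp'
  have hTv : γ T = v := hTG
  have hsplit : eVariationOn γ (Set.Icc 0 T) + eVariationOn γ (Set.Icc T 1)
      = eVariationOn γ (Set.Icc 0 1) := by
    have := eVariationOn.Icc_add_Icc γ (s := Set.univ) hTmem.1 hTmem.2 (Set.mem_univ T)
    simpa using this
  have hle1 : idist N.locus (γ 0) (γ T) ≤ eVariationOn γ (Set.Icc 0 T) :=
    idist_le_eVariationOn_Icc hTmem.1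
      (hc.mono (Set.Icc_subset_Icc le_rfl hTmem.2))
      ((Set.image_mono (Set.Icc_subset_Icc le_rfl hTmem.2)).trans himg)
  have hle2 : edist (γ T) (γ 1) ≤ eVariationOn γ (Set.Icc T 1) :=
    eVariationOn.edist_le γ (Set.left_mem_Icc.2 hTmem.2) (Set.right_mem_Icc.2 hTmem.2)
  calc idist N.locus z v + edist v u
      = idist N.locus (γ 0) (γ T) + edist (γ T) (γ 1) := by rw [hTv, h0, h1']
    _ ≤ eVariationOn γ (Set.Icc 0 T) + eVariationOn γ (Set.Icc T 1) := add_le_add hle1 hle2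
    _ = eVariationOn γ (Set.Icc 0 1) := hsplit

end PlaneNetwork

section LowerHelpers

lemma idist_le_idiam {X : Set Pt} {p q : Pt} (hp : p ∈ X) (hq : q ∈ X) :
    idist X p q ≤ idiam X := by
  have h1 : idist X p q ≤ ecc X p := by
    rw [ecc]
    exact le_iSup₂ (f := fun q (_ : q ∈ X) => idist X p q) q hq
  refine h1.trans ?_
  rw [idiam]
  exact le_iSup₂ (f := fun p (_ : p ∈ X) => ecc X p) p hp

lemma ofReal_min' (x y : ℝ) :
    ENNReal.ofReal (min x y) = min (ENNReal.ofReal x) (ENNReal.ofReal y) := by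
  rcases le_total x y with h | h
  · rw [min_eq_left h, min_eq_left (ENNReal.ofReal_le_ofReal h)]
  · rw [min_eq_right h, min_eq_right (ENNReal.ofReal_le_ofReal h)]

lemma ofReal_half (x : ℝ) : ENNReal.ofReal x / 2 = ENNReal.ofReal (x / 2) := by
  rw [ENNReal.ofReal_div_of_pos (by norm_num : (0:ℝ) < 2)]
  norm_num

lemma ofReal_le_of_forall_eps {m e0 : ℝ} {c : ℝ≥0∞} (he0 : 0 < e0)
    (h : ∀ ε : ℝ, 0 < ε → ε ≤ e0 → ENNReal.ofReal (m - ε) ≤ c) :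
    ENNReal.ofReal m ≤ c := by
  rcases eq_or_ne c ⊤ with rfl | hc
  · exact le_top
  rw [ENNReal.ofReal_le_iff_le_toReal hc]
  by_contra hlt
  push_neg at hlt
  set ε := min e0 ((m - c.toReal) / 2) with hε
  have hε0 : 0 < ε := lt_min he0 (by linarith)
  have h2 := h ε hε0 (min_le_left _ _)
  rw [ENNReal.ofReal_le_iff_le_toReal hc] at h2
  have hεle : ε ≤ (m - c.toReal) / 2 := min_le_right _ _
  linarith

lemma toReal_le_add {A C : ℝ≥0∞} {a : ℝ} (h : A ≤ ENNReal.ofReal a + C)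
    (hC : C ≠ ⊤) (ha : 0 ≤ a) : A.toReal ≤ a + C.toReal := by
  have hfin : ENNReal.ofReal a + C ≠ ⊤ := by
    simp [hC, ENNReal.ofReal_ne_top]
  have h2 := ENNReal.toReal_mono hfin h
  rwa [ENNReal.toReal_add ENNReal.ofReal_ne_top hC, ENNReal.toReal_ofReal ha] at h2

lemma toReal_le_add' {A C : ℝ≥0∞} {a : ℝ} (h : A ≤ C + ENNReal.ofReal a)
    (hC : C ≠ ⊤) (ha : 0 ≤ a) : A.toReal ≤ C.toReal + a := by
  rw [add_comm] at h
  have := toReal_le_add h hC ha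
  linarith

end LowerHelpers

namespace PlaneNetwork

variable {N : PlaneNetwork} {u v u' v' : Pt}

lemma idiam_top_of (hp : u ∈ N.locus) (hq : u' ∈ N.locus)
    (h : idist N.locus u u' = ⊤) : idiam N.locus = ⊤ :=
  top_unique (h ▸ idist_le_idiam hp hq)

lemma key2 (he : N.IsEdge u v) (he' : N.IsEdge u' v')
    (hsets : ({u, v} : Set Pt) ≠ {u', v'}) :
    min ((idist N.locus u v + idist N.locus v v' + idist N.locus v' u' +
            idist N.locus u' u) / 2)
        ((idist N.locus u v + idist N.locus v u' + idist N.locus u' v' +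
            idist N.locus v' u) / 2)
      ≤ idiam N.locus := by
  have hu : u ∈ N.locus := he.left_mem_locus
  have hv : v ∈ N.locus := he.right_mem_locus
  have hu' : u' ∈ N.locus := he'.left_mem_locus
  have hv' : v' ∈ N.locus := he'.right_mem_locus
  rcases eq_or_ne (idist N.locus u u') ⊤ with hA | hA
  · rw [idiam_top_of hu hu' hA]; exact le_top
  rcases eq_or_ne (idist N.locus u v') ⊤ with hB | hB
  · rw [idiam_top_of hu hv' hB]; exact le_top
  rcases eq_or_ne (idist N.locus v u') ⊤ with hC | hC
  · rw [idiam_top_of hv hu' hC]; exact le_top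
  rcases eq_or_ne (idist N.locus v v') ⊤ with hD | hD
  · rw [idiam_top_of hv hv' hD]; exact le_top
  set a := dist u v with hadef
  set a' := dist u' v' with ha'def
  have hEuv : idist N.locus u v = ENNReal.ofReal a := by rw [he.idist_eq, edist_dist]
  have hEu'v' : idist N.locus u' v' = ENNReal.ofReal a' := by rw [he'.idist_eq, edist_dist]
  set rA := (idist N.locus u u').toReal with hrAdef
  set rB := (idist N.locus u v').toReal with hrBdef
  set rC := (idist N.locus v u').toReal with hrCdef
  set rD := (idist N.locus v v').toReal with hrDdef
  have hA' : idist N.locus u u' = ENNReal.ofReal rA := (ENNReal.ofReal_toReal hA).symm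
  have hB' : idist N.locus u v' = ENNReal.ofReal rB := (ENNReal.ofReal_toReal hB).symm
  have hC' : idist N.locus v u' = ENNReal.ofReal rC := (ENNReal.ofReal_toReal hC).symm
  have hD' : idist N.locus v v' = ENNReal.ofReal rD := (ENNReal.ofReal_toReal hD).symm
  have ha : 0 < a := dist_pos.2 he.ne
  have ha' : 0 < a' := dist_pos.2 he'.ne
  have hrA : 0 ≤ rA := ENNReal.toReal_nonneg
  have hrB : 0 ≤ rB := ENNReal.toReal_nonneg
  have hrC : 0 ≤ rC := ENNReal.toReal_nonneg
  have hrD : 0 ≤ rD := ENNReal.toReal_nonneg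
  -- triangle inequalities
  have t1 : rA ≤ a + rC := toReal_le_add
    (by rw [← hEuv]; exact idist_triangle u v u') hC dist_nonneg
  have t2 : rB ≤ a + rD := toReal_le_add
    (by rw [← hEuv]; exact idist_triangle u v v') hD dist_nonneg
  have t3 : rC ≤ a + rA := toReal_le_add
    (by rw [← hEuv, idist_comm (p := u) (q := v)]; exact idist_triangle v u u') hA dist_nonneg
  have t4 : rD ≤ a + rB := toReal_le_add
    (by rw [← hEuv, idist_comm (p := u) (q := v)]; exact idist_triangle v u v') hB dist_nonneg
  have t5 : rA ≤ rB + a' := toReal_le_add'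
    (by rw [← hEu'v', idist_comm (p := u') (q := v')]; exact idist_triangle u v' u') hB dist_nonneg
  have t6 : rC ≤ rD + a' := toReal_le_add'
    (by rw [← hEu'v', idist_comm (p := u') (q := v')]; exact idist_triangle v v' u') hD dist_nonneg
  have t7 : rB ≤ rA + a' := toReal_le_add'
    (by rw [← hEu'v']; exact idist_triangle u u' v') hA dist_nonneg
  have t8 : rD ≤ rC + a' := toReal_le_add'
    (by rw [← hEu'v']; exact idist_triangle v u' v') hC dist_nonneg
  set x := (2*a + rC + rD - rA - rB)/4 with hxdef
  have hx0 : 0 ≤ x := by rw [hxdef]; linarith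
  have hxa : x ≤ a := by rw [hxdef]; linarith
  set y0 := (2*a' + rB + rD - rA - rC)/4 with hy0def
  have hy00 : 0 ≤ y0 := by rw [hy0def]; linarith
  have hy0a : y0 ≤ a' := by rw [hy0def]; linarith
  set h1r := (a + a' + rA + rD)/2 with h1rdef
  set h2r := (a + a' + rB + rC)/2 with h2rdef
  have e1 : x + rA + y0 = h1r := by rw [hxdef, hy0def, h1rdef]; ring
  have e2 : x + rB + (a' - y0) = h2r := by rw [hxdef, hy0def, h2rdef]; ring
  have e3 : (a - x) + rC + y0 = h2r := by rw [hxdef, hy0def, h2rdef]; ring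
  have e4 : (a - x) + rD + (a' - y0) = h1r := by rw [hxdef, hy0def, h1rdef]; ring
  have hcand : min ((idist N.locus u v + idist N.locus v v' + idist N.locus v' u' +
          idist N.locus u' u) / 2)
      ((idist N.locus u v + idist N.locus v u' + idist N.locus u' v' +
          idist N.locus v' u) / 2) = ENNReal.ofReal (min h1r h2r) := by
    rw [hEuv, hD', idist_comm (p := v') (q := u'), hEu'v',
      idist_comm (p := u') (q := u), hA',
      idist_comm (p := v') (q := u), hB', hC',
      ← ENNReal.ofReal_add dist_nonneg hrD,
      ← ENNReal.ofReal_add (by positivity) dist_nonneg,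
      ← ENNReal.ofReal_add (by positivity) hrA,
      ← ENNReal.ofReal_add dist_nonneg hrC,
      ← ENNReal.ofReal_add (by positivity) dist_nonneg,
      ← ENNReal.ofReal_add (by positivity) hrB,
      ofReal_half, ofReal_half, ← ofReal_min']
    congr 1
    rw [h1rdef, h2rdef]
    rw [show a + rD + a' + rA = a + a' + rA + rD by ring,
      show a + rC + a' + rB = a + a' + rB + rC by ring]
  rw [hcand]
  refine ofReal_le_of_forall_eps (half_pos ha') fun ε hε hεle => ?_
  set y := max ε (min y0 (a' - ε)) with hydef
  have hy_pos : 0 < y := lt_of_lt_of_le hε (le_max_left _ _)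
  have hy_lt : y < a' := by
    rw [hydef]
    exact max_lt (by linarith) (lt_of_le_of_lt (min_le_right _ _) (by linarith))
  have hy_ub : y ≤ y0 + ε := by
    rw [hydef]
    exact max_le (by linarith) (le_trans (min_le_left _ _) (by linarith))
  have hy_lb : y0 - ε ≤ y := by
    rw [hydef]
    exact le_trans (le_min (by linarith) (by linarith)) (le_max_right _ _)
  set p := (AffineMap.lineMap u v : ℝ →ᵃ[ℝ] Pt) (x / a) with hpdef
  set q := (AffineMap.lineMap u' v' : ℝ →ᵃ[ℝ] Pt) (y / a') with hqdef
  have hpseg : p ∈ segment ℝ u v :=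
    lineMap_mem_segment' (div_nonneg hx0 ha.le) ((div_le_one ha).2 hxa)
  have hqseg : q ∈ segment ℝ u' v' :=
    lineMap_mem_segment' (div_nonneg hy_pos.le ha'.le) ((div_le_one ha').2 hy_lt.le)
  have hq_ne : q ∉ ({u', v'} : Set Pt) := by
    rintro (h | h)
    · rcases AffineMap.lineMap_eq_left_iff.1 h with h' | h'
      · exact he'.ne h'
      · rw [div_eq_zero_iff] at h'
        rcases h' with h' | h'
        · exact hy_pos.ne' h'
        · exact ha'.ne' h'
    · rcases AffineMap.lineMap_eq_right_iff.1 h with h' | h'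
      · exact he'.ne h'
      · rw [div_eq_one_iff_eq ha'.ne'] at h'
        exact hy_lt.ne h'
  have hq_notin : q ∉ segment ℝ u v := fun hmem =>
    hq_ne (seg_inter_subset he he' hsets ⟨hmem, hqseg⟩).2
  have hup : edist u p = ENNReal.ofReal x := by
    rw [hpdef, edist_lineMap_left u v (div_nonneg hx0 ha.le)]
    congr 1
    field_simp
    rfl
  have hvp : edist v p = ENNReal.ofReal (a - x) := by
    rw [edist_comm, hpdef, edist_lineMap_right u v ((div_le_one ha).2 hxa)]
    congr 1
    field_simp
    rw [← hadef]; ring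
  have hu'q : edist u' q = ENNReal.ofReal y := by
    rw [hqdef, edist_lineMap_left u' v' (div_nonneg hy_pos.le ha'.le)]
    congr 1
    field_simp
    rfl
  have hv'q : edist v' q = ENNReal.ofReal (a' - y) := by
    rw [edist_comm, hqdef, edist_lineMap_right u' v' ((div_le_one ha').2 hy_lt.le)]
    congr 1
    field_simp
    rw [← ha'def]; ring
  have cut_p : min (idist N.locus q u + edist u p) (idist N.locus q v + edist v p)
      ≤ idist N.locus q p :=
    cut_interior he hpseg (fun hm => hq_notin hm.1)
  have cut_qu : min (idist N.locus u u' + edist u' q) (idist N.locus u v' + edist v' q)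
      ≤ idist N.locus u q :=
    cut_interior he' hqseg (vertex_not_mem_seg_interior he' he (fun hh => hsets hh.symm))
  have cut_qv : min (idist N.locus v u' + edist u' q) (idist N.locus v v' + edist v' q)
      ≤ idist N.locus v q :=
    cut_interior he' hqseg (vertex_not_mem_seg_interior he' he.symm
      (fun hh => hsets ((Set.pair_comm u v).trans hh.symm)))
  have hqu : ENNReal.ofReal (min (rA + y) (rB + (a' - y))) ≤ idist N.locus q u := by
    rw [idist_comm]
    refine le_trans ?_ cut_qu
    rw [hu'q, hv'q, hA', hB', ← ENNReal.ofReal_add hrA hy_pos.le,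
      ← ENNReal.ofReal_add hrB (by linarith), ofReal_min']
  have hqv : ENNReal.ofReal (min (rC + y) (rD + (a' - y))) ≤ idist N.locus q v := by
    rw [idist_comm]
    refine le_trans ?_ cut_qv
    rw [hu'q, hv'q, hC', hD', ← ENNReal.ofReal_add hrC hy_pos.le,
      ← ENNReal.ofReal_add hrD (by linarith), ofReal_min']
  have hreal : min h1r h2r - ε ≤
      min (min (rA + y) (rB + (a' - y)) + x) (min (rC + y) (rD + (a' - y)) + (a - x)) := by
    have hm1 := min_le_left h1r h2r
    have hm2 := min_le_right h1r h2r
    refine le_min ?_ ?_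
    · rcases le_total (rA + y) (rB + (a' - y)) with hc | hc
      · rw [min_eq_left hc]; linarith
      · rw [min_eq_right hc]; linarith
    · rcases le_total (rC + y) (rD + (a' - y)) with hc | hc
      · rw [min_eq_left hc]; linarith
      · rw [min_eq_right hc]; linarith
  have main : ENNReal.ofReal (min h1r h2r - ε) ≤ idist N.locus q p := by
    refine le_trans ?_ cut_p
    rw [hup, hvp]
    calc ENNReal.ofReal (min h1r h2r - ε)
        ≤ ENNReal.ofReal (min (min (rA + y) (rB + (a' - y)) + x)
            (min (rC + y) (rD + (a' - y)) + (a - x))) := ENNReal.ofReal_le_ofReal hreal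
      _ = min (ENNReal.ofReal (min (rA + y) (rB + (a' - y)) + x))
            (ENNReal.ofReal (min (rC + y) (rD + (a' - y)) + (a - x))) := ofReal_min' _ _
      _ ≤ min (idist N.locus q u + ENNReal.ofReal x)
            (idist N.locus q v + ENNReal.ofReal (a - x)) := by
          refine min_le_min ?_ ?_
          · rw [ENNReal.ofReal_add (le_min (by linarith) (by linarith)) hx0]
            exact add_le_add_left hqu _
          · rw [ENNReal.ofReal_add (le_min (by linarith) (by linarith)) (by linarith)]
            exact add_le_add_left hqv _
  exact main.trans (idist_le_idiam (he'.seg_subset_locus hqseg) (he.seg_subset_locus hpseg))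

end PlaneNetwork

namespace PlaneNetwork

variable {N : PlaneNetwork} {u v u' v' : Pt}

lemma key3 (he : N.IsEdge u v) (hu : N.IsPendantVertex u) (he' : N.IsEdge u' v')
    (hnu' : ¬N.IsPendantVertex u') (hnv' : ¬N.IsPendantVertex v') :
    idist N.locus u v +
        (idist N.locus v u' + idist N.locus u' v' + idist N.locus v' v) / 2
      ≤ idiam N.locus := by
  have hsets : ({u, v} : Set Pt) ≠ {u', v'} := by
    intro h
    have : u ∈ ({u', v'} : Set Pt) := h ▸ Set.mem_insert u {v}
    rcases this with h' | h'
    · exact hnu' (h' ▸ hu)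
    · exact hnv' (h' ▸ hu)
  have hvX : v ∈ N.locus := he.right_mem_locus
  have huX : u ∈ N.locus := he.left_mem_locus
  have hu'X : u' ∈ N.locus := he'.left_mem_locus
  have hv'X : v' ∈ N.locus := he'.right_mem_locus
  rcases eq_or_ne (idist N.locus v u') ⊤ with hC | hC
  · rw [idiam_top_of hvX hu'X hC]; exact le_top
  rcases eq_or_ne (idist N.locus v v') ⊤ with hD | hD
  · rw [idiam_top_of hvX hv'X hD]; exact le_top
  set a := dist u v with hadef
  set a' := dist u' v' with ha'def
  have hEuv : idist N.locus u v = ENNReal.ofReal a := by rw [he.idist_eq, edist_dist]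
  have hEu'v' : idist N.locus u' v' = ENNReal.ofReal a' := by rw [he'.idist_eq, edist_dist]
  set rC := (idist N.locus v u').toReal with hrCdef
  set rD := (idist N.locus v v').toReal with hrDdef
  have hC' : idist N.locus v u' = ENNReal.ofReal rC := (ENNReal.ofReal_toReal hC).symm
  have hD' : idist N.locus v v' = ENNReal.ofReal rD := (ENNReal.ofReal_toReal hD).symm
  have ha : 0 < a := dist_pos.2 he.ne
  have ha' : 0 < a' := dist_pos.2 he'.ne
  have hrC : 0 ≤ rC := ENNReal.toReal_nonneg
  have hrD : 0 ≤ rD := ENNReal.toReal_nonneg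
  have t6 : rC ≤ rD + a' := toReal_le_add'
    (by rw [← hEu'v', idist_comm (p := u') (q := v')]; exact idist_triangle v v' u') hD dist_nonneg
  have t8 : rD ≤ rC + a' := toReal_le_add'
    (by rw [← hEu'v']; exact idist_triangle v u' v') hC dist_nonneg
  set y0 := (a' + rD - rC)/2 with hy0def
  have hy00 : 0 ≤ y0 := by rw [hy0def]; linarith
  have hy0a : y0 ≤ a' := by rw [hy0def]; linarith
  set m := a + (rC + a' + rD)/2 with hmdef
  have hcand : idist N.locus u v +
      (idist N.locus v u' + idist N.locus u' v' + idist N.locus v' v) / 2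
      = ENNReal.ofReal m := by
    rw [hEuv, hC', hEu'v', idist_comm (p := v') (q := v), hD',
      ← ENNReal.ofReal_add hrC dist_nonneg,
      ← ENNReal.ofReal_add (by positivity) hrD,
      ofReal_half, ← ENNReal.ofReal_add dist_nonneg (by positivity), hmdef]
  rw [hcand]
  refine ofReal_le_of_forall_eps (half_pos ha') fun ε hε hεle => ?_
  set y := max ε (min y0 (a' - ε)) with hydef
  have hy_pos : 0 < y := lt_of_lt_of_le hε (le_max_left _ _)
  have hy_lt : y < a' := by
    rw [hydef]
    exact max_lt (by linarith) (lt_of_le_of_lt (min_le_right _ _) (by linarith))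
  have hy_ub : y ≤ y0 + ε := by
    rw [hydef]
    exact max_le (by linarith) (le_trans (min_le_left _ _) (by linarith))
  have hy_lb : y0 - ε ≤ y := by
    rw [hydef]
    exact le_trans (le_min (by linarith) (by linarith)) (le_max_right _ _)
  set q := (AffineMap.lineMap u' v' : ℝ →ᵃ[ℝ] Pt) (y / a') with hqdef
  have hqseg : q ∈ segment ℝ u' v' :=
    lineMap_mem_segment' (div_nonneg hy_pos.le ha'.le) ((div_le_one ha').2 hy_lt.le)
  have hq_ne : q ∉ ({u', v'} : Set Pt) := by
    rintro (h | h)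
    · rcases AffineMap.lineMap_eq_left_iff.1 h with h' | h'
      · exact he'.ne h'
      · rw [div_eq_zero_iff] at h'
        rcases h' with h' | h'
        · exact hy_pos.ne' h'
        · exact ha'.ne' h'
    · rcases AffineMap.lineMap_eq_right_iff.1 h with h' | h'
      · exact he'.ne h'
      · rw [div_eq_one_iff_eq ha'.ne'] at h'
        exact hy_lt.ne h'
  have hq_notin : q ∉ segment ℝ u v := fun hmem =>
    hq_ne (seg_inter_subset he he' hsets ⟨hmem, hqseg⟩).2
  have hu'q : edist u' q = ENNReal.ofReal y := by
    rw [hqdef, edist_lineMap_left u' v' (div_nonneg hy_pos.le ha'.le)]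
    congr 1
    field_simp
    rfl
  have hv'q : edist v' q = ENNReal.ofReal (a' - y) := by
    rw [edist_comm, hqdef, edist_lineMap_right u' v' ((div_le_one ha').2 hy_lt.le)]
    congr 1
    field_simp
    rw [← ha'def]; ring
  have cutP : idist N.locus q v + edist v u ≤ idist N.locus q u :=
    cut_pendant hu he hq_notin
  have cut_qv : min (idist N.locus v u' + edist u' q) (idist N.locus v v' + edist v' q)
      ≤ idist N.locus v q :=
    cut_interior he' hqseg (vertex_not_mem_seg_interior he' he.symm
      (fun hh => hsets ((Set.pair_comm u v).trans hh.symm)))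
  have hqv : ENNReal.ofReal (min (rC + y) (rD + (a' - y))) ≤ idist N.locus q v := by
    rw [idist_comm]
    refine le_trans ?_ cut_qv
    rw [hu'q, hv'q, hC', hD', ← ENNReal.ofReal_add hrC hy_pos.le,
      ← ENNReal.ofReal_add hrD (by linarith), ofReal_min']
  have hreal : m - ε ≤ min (rC + y) (rD + (a' - y)) + a := by
    rcases le_total (rC + y) (rD + (a' - y)) with hc | hc
    · rw [min_eq_left hc]; rw [hmdef] at *; linarith
    · rw [min_eq_right hc]; rw [hmdef] at *; linarith
  have main : ENNReal.ofReal (m - ε) ≤ idist N.locus q u := by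
    refine le_trans ?_ cutP
    have hvu : edist v u = ENNReal.ofReal a := by
      rw [edist_dist, dist_comm]
    rw [hvu]
    calc ENNReal.ofReal (m - ε)
        ≤ ENNReal.ofReal (min (rC + y) (rD + (a' - y)) + a) :=
          ENNReal.ofReal_le_ofReal hreal
      _ = ENNReal.ofReal (min (rC + y) (rD + (a' - y))) + ENNReal.ofReal a := by
          rw [ENNReal.ofReal_add (le_min (by linarith) (by linarith)) ha.le]
      _ ≤ idist N.locus q v + ENNReal.ofReal a := add_le_add_left hqv _
  exact main.trans (idist_le_idiam (he'.seg_subset_locus hqseg) huX)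

end PlaneNetwork

lemma min_le_half_add (a b : ℝ≥0∞) : min a b ≤ (a + b) / 2 := by
  rw [ENNReal.le_div_iff_mul_le (Or.inl (by norm_num)) (Or.inl (by norm_num)), mul_two]
  exact add_le_add (min_le_left _ _) (min_le_right _ _)

namespace PlaneNetwork

variable {N : PlaneNetwork} {u v u' v' p q : Pt}

lemma upper_same (he : N.IsEdge u v) (hp : p ∈ segment ℝ u v) (hq : q ∈ segment ℝ u v) :
    idist N.locus p q ≤ idist N.locus u v :=
  (he.idist_le_edist_of_mem_seg hp hq).trans
    ((edist_le_of_mem_segment hp hq).trans he.idist_eq.ge)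

lemma upper2 (he : N.IsEdge u v) (he' : N.IsEdge u' v')
    (hp : p ∈ segment ℝ u v) (hq : q ∈ segment ℝ u' v') :
    idist N.locus p q ≤
      min ((idist N.locus u v + idist N.locus v v' + idist N.locus v' u' +
              idist N.locus u' u) / 2)
          ((idist N.locus u v + idist N.locus v u' + idist N.locus u' v' +
              idist N.locus v' u) / 2) := by
  have hpu : idist N.locus p u ≤ edist p u :=
    he.idist_le_edist_of_mem_seg hp (left_mem_segment ℝ u v)
  have hpv : idist N.locus p v ≤ edist p v :=
    he.idist_le_edist_of_mem_seg hp (right_mem_segment ℝ u v)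
  have hu'q : idist N.locus u' q ≤ edist u' q :=
    he'.idist_le_edist_of_mem_seg (left_mem_segment ℝ u' v') hq
  have hv'q : idist N.locus v' q ≤ edist v' q :=
    he'.idist_le_edist_of_mem_seg (right_mem_segment ℝ u' v') hq
  have route : ∀ w w' : Pt, idist N.locus p w ≤ edist p w → idist N.locus w' q ≤ edist w' q →
      idist N.locus p q ≤ edist p w + idist N.locus w w' + edist w' q := by
    intro w w' h1 h2
    calc idist N.locus p q ≤ idist N.locus p w + idist N.locus w q := idist_triangle _ _ _
      _ ≤ edist p w + idist N.locus w q := add_le_add_left h1 _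
      _ ≤ edist p w + (idist N.locus w w' + idist N.locus w' q) :=
          add_le_add_right (idist_triangle _ _ _) _
      _ ≤ edist p w + (idist N.locus w w' + edist w' q) :=
          add_le_add_right (add_le_add_right h2 _) _
      _ = edist p w + idist N.locus w w' + edist w' q := (add_assoc _ _ _).symm
  have M1 := route u u' hpu hu'q
  have M2 := route u v' hpu hv'q
  have M3 := route v u' hpv hu'q
  have M4 := route v v' hpv hv'q
  have hseg1 : edist p u + edist p v = edist u v := by
    rw [edist_comm p u]; exact edist_add_edist_of_mem_segment hp
  have hseg2 : edist u' q + edist v' q = edist u' v' := by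
    rw [edist_comm v' q]; exact edist_add_edist_of_mem_segment hq
  refine le_min ?_ ?_
  · calc idist N.locus p q
        ≤ min (edist p u + idist N.locus u u' + edist u' q)
            (edist p v + idist N.locus v v' + edist v' q) := le_min M1 M4
      _ ≤ ((edist p u + idist N.locus u u' + edist u' q) +
            (edist p v + idist N.locus v v' + edist v' q)) / 2 := min_le_half_add _ _
      _ = (idist N.locus u v + idist N.locus v v' + idist N.locus v' u' +
            idist N.locus u' u) / 2 := by
          rw [he.idist_eq, idist_comm (p := v') (q := u'), he'.idist_eq,
            idist_comm (p := u') (q := u)]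
          congr 1
          rw [← hseg1, ← hseg2]
          ring
  · calc idist N.locus p q
        ≤ min (edist p u + idist N.locus u v' + edist v' q)
            (edist p v + idist N.locus v u' + edist u' q) := le_min M2 M3
      _ ≤ ((edist p u + idist N.locus u v' + edist v' q) +
            (edist p v + idist N.locus v u' + edist u' q)) / 2 := min_le_half_add _ _
      _ = (idist N.locus u v + idist N.locus v u' + idist N.locus u' v' +
            idist N.locus v' u) / 2 := by
          rw [he.idist_eq, he'.idist_eq, idist_comm (p := v') (q := u)]
          congr 1
          rw [← hseg1, ← hseg2]
          ring

lemma upper3 (he : N.IsEdge u v) (he' : N.IsEdge u' v')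
    (hp : p ∈ segment ℝ u v) (hq : q ∈ segment ℝ u' v') :
    idist N.locus p q ≤
      idist N.locus u v +
        (idist N.locus v u' + idist N.locus u' v' + idist N.locus v' v) / 2 := by
  have hpv : idist N.locus p v ≤ edist p v :=
    he.idist_le_edist_of_mem_seg hp (right_mem_segment ℝ u v)
  have hu'q : idist N.locus u' q ≤ edist u' q :=
    he'.idist_le_edist_of_mem_seg (left_mem_segment ℝ u' v') hq
  have hv'q : idist N.locus v' q ≤ edist v' q :=
    he'.idist_le_edist_of_mem_seg (right_mem_segment ℝ u' v') hq
  have hseg2 : edist u' q + edist v' q = edist u' v' := by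
    rw [edist_comm v' q]; exact edist_add_edist_of_mem_segment hq
  have hvq : idist N.locus v q ≤
      (idist N.locus v u' + idist N.locus u' v' + idist N.locus v' v) / 2 := by
    have N1 : idist N.locus v q ≤ idist N.locus v u' + edist u' q :=
      (idist_triangle _ _ _).trans (add_le_add_right hu'q _)
    have N2 : idist N.locus v q ≤ idist N.locus v v' + edist v' q :=
      (idist_triangle _ _ _).trans (add_le_add_right hv'q _)
    calc idist N.locus v q
        ≤ min (idist N.locus v u' + edist u' q) (idist N.locus v v' + edist v' q) :=
          le_min N1 N2
      _ ≤ ((idist N.locus v u' + edist u' q) + (idist N.locus v v' + edist v' q)) / 2 :=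
          min_le_half_add _ _
      _ = (idist N.locus v u' + idist N.locus u' v' + idist N.locus v' v) / 2 := by
          rw [he'.idist_eq, idist_comm (p := v') (q := v)]
          congr 1
          rw [← hseg2]
          ring
  calc idist N.locus p q ≤ idist N.locus p v + idist N.locus v q := idist_triangle _ _ _
    _ ≤ edist p v + idist N.locus v q := add_le_add_left hpv _
    _ ≤ edist u v + idist N.locus v q :=
        add_le_add_left (edist_le_of_mem_segment hp (right_mem_segment ℝ u v)) _
    _ ≤ idist N.locus u v +
        (idist N.locus v u' + idist N.locus u' v' + idist N.locus v' v) / 2 := by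
        rw [he.idist_eq]
        exact add_le_add_right hvq _

lemma upper_pp (he : N.IsEdge u v) (hu : N.IsPendantVertex u)
    (he' : N.IsEdge u' v') (hu' : N.IsPendantVertex u')
    (hsets : ({u, v} : Set Pt) ≠ {u', v'})
    (hp : p ∈ segment ℝ u v) (hq : q ∈ segment ℝ u' v') :
    idist N.locus p q ≤ idist N.locus u u' := by
  have hvX : v ∈ N.locus := he.right_mem_locus
  have hu'_notin : u' ∉ segment ℝ u v := by
    intro h
    have hmem := (seg_inter_subset he he' hsets ⟨h, left_mem_segment ℝ u' v'⟩).1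
    have hne := pendant_ne_other_vertex hu' he' he (fun hh => hsets hh.symm)
    rcases hmem with h' | h'
    · exact hne.1 h'
    · exact hne.2 h'
  have c1 : idist N.locus u' v + edist v u ≤ idist N.locus u' u :=
    cut_pendant hu he hu'_notin
  have c2 : idist N.locus v v' + edist u' v' ≤ idist N.locus u' v := by
    by_cases hvseg : v ∈ segment ℝ u' v'
    · have hv_mem := (seg_inter_subset he' he (fun hh => hsets hh.symm)
        ⟨hvseg, right_mem_segment ℝ u v⟩).1
      rcases hv_mem with h' | h'
      · exact absurd (h' ▸ right_mem_segment ℝ u v) hu'_notin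
      · rw [h', idist_self (h' ▸ hvX), zero_add]
        exact edist_le_idist
    · have := cut_pendant hu' he' hvseg
      rwa [edist_comm, idist_comm (p := v) (q := u')] at this
  have step2 : edist u v + (idist N.locus v v' + edist u' v') ≤ idist N.locus u u' := by
    calc edist u v + (idist N.locus v v' + edist u' v')
        ≤ edist u v + idist N.locus u' v := add_le_add_right c2 _
      _ = idist N.locus u' v + edist v u := by rw [edist_comm u v, add_comm]
      _ ≤ idist N.locus u' u := c1
      _ = idist N.locus u u' := idist_comm
  have step1 : idist N.locus p q ≤ edist u v + (idist N.locus v v' + edist u' v') := by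
    calc idist N.locus p q ≤ idist N.locus p v + idist N.locus v q := idist_triangle _ _ _
      _ ≤ edist p v + idist N.locus v q :=
          add_le_add_left (he.idist_le_edist_of_mem_seg hp (right_mem_segment ℝ u v)) _
      _ ≤ edist p v + (idist N.locus v v' + idist N.locus v' q) :=
          add_le_add_right (idist_triangle _ _ _) _
      _ ≤ edist p v + (idist N.locus v v' + edist v' q) :=
          add_le_add_right (add_le_add_right
            (he'.idist_le_edist_of_mem_seg (right_mem_segment ℝ u' v') hq) _) _
      _ ≤ edist u v + (idist N.locus v v' + edist u' v') := by
          exact add_le_add (edist_le_of_mem_segment hp (right_mem_segment ℝ u v))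
            (add_le_add_right
              (edist_le_of_mem_segment (right_mem_segment ℝ u' v') hq) _)
  exact step1.trans step2

end PlaneNetwork

namespace PlaneNetwork

variable {N : PlaneNetwork}

lemma le_T1 (a b : Pt) (ha : a ∈ N.V) (hb : b ∈ N.V) :
    idist N.locus a b ≤ ⨆ u ∈ N.V, ⨆ w ∈ N.V, idist N.locus u w :=
  le_iSup₂_of_le a ha (le_iSup₂_of_le b hb le_rfl)

lemma le_T2 (a b c d : Pt)
    (hcond : N.IsEdge a b ∧ N.IsEdge c d ∧ ({a, b} : Set Pt) ≠ {c, d} ∧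
      ¬N.IsPendantVertex a ∧ ¬N.IsPendantVertex b ∧
      ¬N.IsPendantVertex c ∧ ¬N.IsPendantVertex d) :
    min ((idist N.locus a b + idist N.locus b d + idist N.locus d c +
            idist N.locus c a) / 2)
        ((idist N.locus a b + idist N.locus b c + idist N.locus c d +
            idist N.locus d a) / 2)
      ≤ ⨆ u, ⨆ v, ⨆ u', ⨆ v', ⨆ (_ : N.IsEdge u v ∧ N.IsEdge u' v' ∧
          ({u, v} : Set Pt) ≠ {u', v'} ∧
          ¬N.IsPendantVertex u ∧ ¬N.IsPendantVertex v ∧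
          ¬N.IsPendantVertex u' ∧ ¬N.IsPendantVertex v'),
        min ((idist N.locus u v + idist N.locus v v' + idist N.locus v' u' +
                idist N.locus u' u) / 2)
            ((idist N.locus u v + idist N.locus v u' + idist N.locus u' v' +
                idist N.locus v' u) / 2) :=
  le_iSup_of_le a (le_iSup_of_le b (le_iSup_of_le c (le_iSup_of_le d
    (le_iSup_of_le hcond le_rfl))))

lemma le_T3 (a b c d : Pt)
    (hcond : N.IsEdge a b ∧ N.IsPendantVertex a ∧ N.IsEdge c d ∧
      ¬N.IsPendantVertex c ∧ ¬N.IsPendantVertex d) :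
    idist N.locus a b + (idist N.locus b c + idist N.locus c d + idist N.locus d b) / 2
      ≤ ⨆ u, ⨆ v, ⨆ u', ⨆ v', ⨆ (_ : N.IsEdge u v ∧ N.IsPendantVertex u ∧
          N.IsEdge u' v' ∧ ¬N.IsPendantVertex u' ∧ ¬N.IsPendantVertex v'),
        idist N.locus u v +
          (idist N.locus v u' + idist N.locus u' v' + idist N.locus v' v) / 2 :=
  le_iSup_of_le a (le_iSup_of_le b (le_iSup_of_le c (le_iSup_of_le d
    (le_iSup_of_le hcond le_rfl))))

end PlaneNetwork

theorem stmt7' (N : PlaneNetwork) :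
    idiam N.locus =
      (⨆ u ∈ N.V, ⨆ w ∈ N.V, idist N.locus u w) ⊔
      (⨆ u, ⨆ v, ⨆ u', ⨆ v', ⨆ (_ : N.IsEdge u v ∧ N.IsEdge u' v' ∧
          ({u, v} : Set Pt) ≠ {u', v'} ∧
          ¬N.IsPendantVertex u ∧ ¬N.IsPendantVertex v ∧
          ¬N.IsPendantVertex u' ∧ ¬N.IsPendantVertex v'),
        min ((idist N.locus u v + idist N.locus v v' + idist N.locus v' u' +
                idist N.locus u' u) / 2)
            ((idist N.locus u v + idist N.locus v u' + idist N.locus u' v' +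
                idist N.locus v' u) / 2)) ⊔
      (⨆ u, ⨆ v, ⨆ u', ⨆ v', ⨆ (_ : N.IsEdge u v ∧ N.IsPendantVertex u ∧
          N.IsEdge u' v' ∧ ¬N.IsPendantVertex u' ∧ ¬N.IsPendantVertex v'),
        idist N.locus u v +
          (idist N.locus v u' + idist N.locus u' v' + idist N.locus v' v) / 2) := by
  classical
  refine le_antisymm ?_ ?_
  · -- upper bound: idiam ≤ RHS
    rw [idiam]
    refine iSup₂_le fun p hp => ?_
    rw [ecc]
    refine iSup₂_le fun q hq => ?_
    obtain ⟨u, v, he, hpseg⟩ := PlaneNetwork.exists_edge_of_mem_locus hp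
    obtain ⟨u', v', he', hqseg⟩ := PlaneNetwork.exists_edge_of_mem_locus hq
    by_cases hsets : ({u, v} : Set Pt) = {u', v'}
    · have hseg_eq : segment ℝ u' v' = segment ℝ u v := by
        rcases Set.pair_eq_pair_iff.1 hsets with ⟨h1, h2⟩ | ⟨h1, h2⟩
        · rw [← h1, ← h2]
        · rw [← h1, ← h2, segment_symm]
      refine le_sup_of_le_left (le_sup_of_le_left ?_)
      exact (PlaneNetwork.upper_same he hpseg (hseg_eq ▸ hqseg)).trans
        (PlaneNetwork.le_T1 u v he.left_mem_V he.right_mem_V)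
    · by_cases hPe : N.IsPendantVertex u ∨ N.IsPendantVertex v
      · by_cases hPf : N.IsPendantVertex u' ∨ N.IsPendantVertex v'
        · -- both edges pendant: bound by vertex distance
          refine le_sup_of_le_left (le_sup_of_le_left ?_)
          rcases hPe with hw | hw <;> rcases hPf with hw' | hw'
          · exact (PlaneNetwork.upper_pp he hw he' hw' hsets hpseg hqseg).trans
              (PlaneNetwork.le_T1 u u' he.left_mem_V he'.left_mem_V)
          · refine (PlaneNetwork.upper_pp he hw he'.symm hw'
              (fun hh => hsets (hh.trans (Set.pair_comm v' u'))) hpseg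
              ((segment_symm ℝ u' v') ▸ hqseg)).trans
              (PlaneNetwork.le_T1 u v' he.left_mem_V he'.right_mem_V)
          · refine (PlaneNetwork.upper_pp he.symm hw he' hw'
              (fun hh => hsets ((Set.pair_comm u v).trans hh)) 
              ((segment_symm ℝ u v) ▸ hpseg) hqseg).trans
              (PlaneNetwork.le_T1 v u' he.right_mem_V he'.left_mem_V)
          · refine (PlaneNetwork.upper_pp he.symm hw he'.symm hw'
              (fun hh => hsets (((Set.pair_comm u v).trans hh).trans (Set.pair_comm v' u')))
              ((segment_symm ℝ u v) ▸ hpseg) ((segment_symm ℝ u' v') ▸ hqseg)).trans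
              (PlaneNetwork.le_T1 v v' he.right_mem_V he'.right_mem_V)
        · push_neg at hPf
          refine le_sup_of_le_right ?_
          rcases hPe with hw | hw
          · exact (PlaneNetwork.upper3 he he' hpseg hqseg).trans
              (PlaneNetwork.le_T3 u v u' v' ⟨he, hw, he', hPf.1, hPf.2⟩)
          · exact (PlaneNetwork.upper3 he.symm he' ((segment_symm ℝ u v) ▸ hpseg) hqseg).trans
              (PlaneNetwork.le_T3 v u u' v' ⟨he.symm, hw, he', hPf.1, hPf.2⟩)
      · push_neg at hPe
        by_cases hPf : N.IsPendantVertex u' ∨ N.IsPendantVertex v'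
        · refine le_sup_of_le_right ?_
          rw [idist_comm]
          rcases hPf with hw' | hw'
          · exact (PlaneNetwork.upper3 he' he hqseg hpseg).trans
              (PlaneNetwork.le_T3 u' v' u v ⟨he', hw', he, hPe.1, hPe.2⟩)
          · exact (PlaneNetwork.upper3 he'.symm he ((segment_symm ℝ u' v') ▸ hqseg) hpseg).trans
              (PlaneNetwork.le_T3 v' u' u v ⟨he'.symm, hw', he, hPe.1, hPe.2⟩)
        · push_neg at hPf
          refine le_sup_of_le_left (le_sup_of_le_right ?_)
          exact (PlaneNetwork.upper2 he he' hpseg hqseg).trans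
            (PlaneNetwork.le_T2 u v u' v' ⟨he, he', hsets, hPe.1, hPe.2, hPf.1, hPf.2⟩)
  · -- lower bound: RHS ≤ idiam
    refine sup_le (sup_le ?_ ?_) ?_
    · refine iSup₂_le fun a ha => iSup₂_le fun b hb => ?_
      exact idist_le_idiam (PlaneNetwork.mem_locus_of_mem_V ha)
        (PlaneNetwork.mem_locus_of_mem_V hb)
    · refine iSup_le fun a => iSup_le fun b => iSup_le fun c => iSup_le fun d =>
        iSup_le fun hcond => ?_
      exact PlaneNetwork.key2 hcond.1 hcond.2.1 hcond.2.2.1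
    · refine iSup_le fun a => iSup_le fun b => iSup_le fun c => iSup_le fun d =>
        iSup_le fun hcond => ?_
      exact PlaneNetwork.key3 hcond.1 hcond.2.1 hcond.2.2.1 hcond.2.2.2.1 hcond.2.2.2.2


/-- The intrinsic diameter of the locus equals the maximum of the finite
collection of values: (1) distances between pairs of vertices; (2) for every pair of
distinct non-pendant edges `uv`, `u'v'`, the minimum of the two half-sum expressions;
(3) for every pendant edge `uv` with `u` pendant and every non-pendant edge `u'v'`, the
value `d(u,v) + (d(v,u') + d(u',v') + d(v',v))/2`. -/
theorem stmt7 (N : PlaneNetwork) (hconn : N.Connected) :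
    idiam N.locus =
      (⨆ u ∈ N.V, ⨆ w ∈ N.V, idist N.locus u w) ⊔
      (⨆ u, ⨆ v, ⨆ u', ⨆ v', ⨆ (_ : N.IsEdge u v ∧ N.IsEdge u' v' ∧
          ({u, v} : Set Pt) ≠ {u', v'} ∧
          ¬N.IsPendantVertex u ∧ ¬N.IsPendantVertex v ∧
          ¬N.IsPendantVertex u' ∧ ¬N.IsPendantVertex v'),
        min ((idist N.locus u v + idist N.locus v v' + idist N.locus v' u' +
                idist N.locus u' u) / 2)
            ((idist N.locus u v + idist N.locus v u' + idist N.locus u' v' +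
                idist N.locus v' u) / 2)) ⊔
      (⨆ u, ⨆ v, ⨆ u', ⨆ v', ⨆ (_ : N.IsEdge u v ∧ N.IsPendantVertex u ∧
          N.IsEdge u' v' ∧ ¬N.IsPendantVertex u' ∧ ¬N.IsPendantVertex v'),
        idist N.locus u v +
          (idist N.locus v u' + idist N.locus u' v' + idist N.locus v' v) / 2) := stmt7' N
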